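/- For the induction motor model, let v₄(x) = μψ_d² e_ω + ηM e_ρ. Then [e_{ψ_d}, v₄](x) = 2μψ_d e_ω for every x, and for every point x with ψ_d ≠ 0, μ ≠ 0 and ηM ≠ 0, the vector 2μψ_d e_ω does not belong to span{e_{I_d}, e_{I_q}, e_{ψ_d}, v₄(x)} ⊆ ℝ⁶; hence the distribution D₂ = span{e_{I_d}, e_{I_q}, e_{ψ_d}, v₄} is not involutive. -/

import Mathlib

/-- The i-th standard basis vector of ℝ⁶; coordinates are ordered
`(θ, ω, ψ_d, ρ, I_d, I_q)`. -/
noncomputable def e (i : Fin 6) : Fin 6 → ℝ := Pi.single i 1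

/-- The vector field `v₄(x) = μψ_d² e_ω + ηM e_ρ` spanning `D₂` together with
`e_{I_d}, e_{I_q}, e_{ψ_d}` for the induction motor. -/
noncomputable def v4 (μ η M : ℝ) : (Fin 6 → ℝ) → (Fin 6 → ℝ) :=
  fun x => (μ * (x 2) ^ 2) • e 1 + (η * M) • e 3

lemma hasFDerivV4 (μ η M : ℝ) (x : Fin 6 → ℝ) :
    HasFDerivAt (v4 μ η M)
      (((2 * μ * x 2) • (ContinuousLinearMap.proj 2 : (Fin 6 → ℝ) →L[ℝ] ℝ)).smulRight (e 1)) x := by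
  have h1 : HasFDerivAt (fun y : Fin 6 → ℝ => μ * (y 2) ^ 2)
      ((2 * μ * x 2) • (ContinuousLinearMap.proj 2 : (Fin 6 → ℝ) →L[ℝ] ℝ)) x := by
    have hp : HasFDerivAt (fun y : Fin 6 → ℝ => y 2)
        (ContinuousLinearMap.proj 2 : (Fin 6 → ℝ) →L[ℝ] ℝ) x :=
      (ContinuousLinearMap.proj 2 : (Fin 6 → ℝ) →L[ℝ] ℝ).hasFDerivAt
    have h2 := (hp.const_mul μ).mul hp
    have h3 : ((fun y : Fin 6 → ℝ => μ * y 2) * fun y => y 2) = (fun y : Fin 6 → ℝ => μ * (y 2) ^ 2) := by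
      ext y; simp only [Pi.mul_apply]; ring
    rw [h3] at h2
    refine h2.congr_fderiv ?_
    ext y
    simp only [ContinuousLinearMap.add_apply, ContinuousLinearMap.smul_apply, ContinuousLinearMap.proj_apply, smul_eq_mul]
    ring
  have := (h1.smul_const (e 1)).add_const ((η * M) • e 3)
  exact this

/-- `[e_{ψ_d}, v₄](x) = 2μψ_d e_ω` for every `x`, and at every point with `ψ_d ≠ 0`,
`μ ≠ 0`, `ηM ≠ 0`, the vector `2μψ_d e_ω` does not belong to
`span{e_{I_d}, e_{I_q}, e_{ψ_d}, v₄(x)}`; hence `D₂` is not involutive. -/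
theorem stmt8 (μ η M : ℝ) :
    (∀ x : Fin 6 → ℝ,
      VectorField.lieBracket ℝ (fun _ => e 2) (v4 μ η M) x = (2 * μ * x 2) • e 1) ∧
    (∀ x : Fin 6 → ℝ, x 2 ≠ 0 → μ ≠ 0 → η * M ≠ 0 →
      (2 * μ * x 2) • e 1 ∉
        Submodule.span ℝ ({e 4, e 5, e 2, v4 μ η M x} : Set (Fin 6 → ℝ))) := by
  constructor
  · intro x
    rw [VectorField.lieBracket, (hasFDerivV4 μ η M x).fderiv, fderiv_fun_const]
    simp [e, Pi.single_apply]
  · intro x hx hμ hηM hmem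
    rw [show ({e 4, e 5, e 2, v4 μ η M x} : Set (Fin 6 → ℝ)) =
        insert (e 4) (insert (e 5) (insert (e 2) {v4 μ η M x})) from rfl] at hmem
    rw [Submodule.mem_span_insert] at hmem
    obtain ⟨a, z, hz, hv⟩ := hmem
    rw [Submodule.mem_span_insert] at hz
    obtain ⟨b, z2, hz2, hv2⟩ := hz
    rw [Submodule.mem_span_insert] at hz2
    obtain ⟨c, z3, hz3, hv3⟩ := hz2
    rw [Submodule.mem_span_singleton] at hz3
    obtain ⟨d, hd⟩ := hz3
    subst hd hv3 hv2
    have h3 := congrFun hv 3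
    have h1 := congrFun hv 1
    simp [e, v4, Pi.single_apply] at h3 h1
    have hd0 : d = 0 := by
      rcases h3 with h | h | h
      · exact h
      · exact absurd (by simp [h]) hηM
      · exact absurd (by simp [h]) hηM
    rw [hd0] at h1
    simp at h1
    rcases h1 with h | h
    · exact hμ h
    · exact hx h
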